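/- arXiv:1006.5219 — 2 statements merged into one kernel-verified Lean document; each statement's English description precedes it below -/
import Mathlib

section
/- For every symmetric g×g complex matrix τ whose imaginary part is positive definite, every z ∈ ℂ^g and every pair of characteristics a, b ∈ ℝ^g, the theta series with characteristics is absolutely summable; that is, the family m ↦ exp(iπ(m+a)ᵀτ(m+a) + 2πi(m+a)ᵀ(z+b)), indexed by m ∈ ℤ^g, is summable in ℂ. -/
lemma theta_aux_nat (A B c : ℝ) (hA : 0 < A) :
    Summable fun n : ℕ => Real.exp (-A * ((n : ℝ) + c) ^ 2 + B * |(n : ℝ) + c|) := by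
  set K : ℝ := (B + 1) ^ 2 / (4 * A) + |c| with hK
  refine Summable.of_nonneg_of_le (fun n => (Real.exp_pos _).le) (fun n => ?_)
    ((Real.summable_exp_neg_nat).mul_left (Real.exp K))
  · rw [← Real.exp_add]
    apply Real.exp_le_exp.2
    set t : ℝ := |(n : ℝ) + c| with ht
    have htn : (n : ℝ) - |c| ≤ t := by
      have h1 := abs_add_le ((n : ℝ) + c) (-c)
      simp only [add_neg_cancel_right, abs_neg] at h1
      have : |(n : ℝ)| = (n : ℝ) := abs_of_nonneg (Nat.cast_nonneg n)
      rw [this] at h1; linarith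
    have habs : |(n : ℝ) + c| ^ 2 = ((n : ℝ) + c) ^ 2 := sq_abs _
    have h2 : -A * t ^ 2 + (B + 1) * t ≤ (B + 1) ^ 2 / (4 * A) := by
      rw [le_div_iff₀ (by linarith : (0:ℝ) < 4 * A)]
      nlinarith [sq_nonneg (2 * A * t - (B + 1))]
    have ht0 : 0 ≤ t := abs_nonneg _
    calc -A * ((n : ℝ) + c) ^ 2 + B * |(n : ℝ) + c| = -A * t ^ 2 + (B + 1) * t - t := by
          rw [ht, habs]; ring
      _ ≤ (B + 1) ^ 2 / (4 * A) - t := by linarith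
      _ ≤ K + -(n : ℝ) := by rw [hK]; linarith

lemma theta_aux_int (A B c : ℝ) (hA : 0 < A) :
    Summable fun n : ℤ => Real.exp (-A * ((n : ℝ) + c) ^ 2 + B * |(n : ℝ) + c|) := by
  apply Summable.of_nat_of_neg
  · exact_mod_cast theta_aux_nat A B c hA
  · have := theta_aux_nat A B (-c) hA
    refine this.congr fun n => ?_
    push_cast
    rw [show -(n:ℝ) + c = -((n:ℝ) + -c) by ring, abs_neg, neg_sq]

lemma theta_summable_pi_prod : ∀ {g : ℕ} (f : Fin g → ℤ → ℝ), (∀ i n, 0 ≤ f i n) →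
    (∀ i, Summable (f i)) → Summable (fun m : Fin g → ℤ => ∏ i, f i (m i)) := by
  intro g
  induction g with
  | zero => intro f _ _; exact Summable.of_finite
  | succ g ih =>
    intro f h0 hs
    have h2 : Summable (fun m : Fin g → ℤ => ∏ i, f i.succ (m i)) :=
      ih (fun i => f i.succ) (fun i n => h0 i.succ n) (fun i => hs i.succ)
    have hn1 : (0 : ℤ → ℝ) ≤ f 0 := fun n => h0 0 n
    have hn2 : (0 : (Fin g → ℤ) → ℝ) ≤ fun m => ∏ i, f i.succ (m i) :=
      fun m => Finset.prod_nonneg fun i _ => h0 _ _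
    have h3 := Summable.mul_of_nonneg (hs 0) h2 hn1 hn2
    have heq : (fun p : ℤ × (Fin g → ℤ) => f 0 p.1 * ∏ i : Fin g, f i.succ (p.2 i)) =
        ((fun m : Fin (g + 1) → ℤ => ∏ i, f i (m i)) ∘
          (Fin.consEquiv (fun _ : Fin (g + 1) => ℤ))) := by
      funext p
      simp [Fin.consEquiv, Fin.prod_univ_succ]
    rw [heq] at h3
    exact ((Fin.consEquiv (fun _ : Fin (g + 1) => ℤ)).summable_iff).1 h3

open Matrix in
lemma theta_posdef_lower_bound {n : Type*} [Fintype n] {Y : Matrix n n ℝ} (hY : Y.PosDef) :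
    ∃ c > 0, ∀ v : n → ℝ, c * ∑ i, v i ^ 2 ≤ v ⬝ᵥ Y.mulVec v := by
  rcases isEmpty_or_nonempty n with he | hne
  · exact ⟨1, one_pos, fun v => by simp [dotProduct]⟩
  · set F : (n → ℝ) → ℝ := fun v => v ⬝ᵥ Y.mulVec v with hF
    have hFc : Continuous F := by
      simp only [hF, dotProduct, Matrix.mulVec]
      exact continuous_finset_sum _ fun i _ => (continuous_apply i).mul
        (continuous_finset_sum _ fun j _ => continuous_const.mul (continuous_apply j))
    have hv₀ : (fun _ : n => (1:ℝ)) ∈ Metric.sphere (0 : n → ℝ) 1 := by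
      simp [pi_norm_const]
    obtain ⟨u, hu, hmin'⟩ := (isCompact_sphere (0 : n → ℝ) 1).exists_isMinOn ⟨_, hv₀⟩
      hFc.continuousOn
    have hmin : ∀ w ∈ Metric.sphere (0 : n → ℝ) 1, F u ≤ F w := fun w hw => hmin' hw
    have hu1 : ‖u‖ = 1 := by simpa using hu
    have hu0 : u ≠ 0 := by intro h; rw [h] at hu1; simp at hu1
    have hc : 0 < F u := by
      have := hY.dotProduct_mulVec_pos hu0
      simpa [hF, dotProduct] using this
    set N : ℕ := Fintype.card n with hN
    have hN0 : 0 < (N : ℝ) := by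
      exact_mod_cast Fintype.card_pos
    refine ⟨F u / N, div_pos hc hN0, fun v => ?_⟩
    by_cases hv : v = 0
    · simp [hv, hF, dotProduct]
    · have ht : 0 < ‖v‖ := norm_pos_iff.2 hv
      have hsph : (‖v‖⁻¹ • v) ∈ Metric.sphere (0 : n → ℝ) 1 := by
        simp [norm_smul, abs_of_pos (inv_pos.2 ht), inv_mul_cancel₀ ht.ne']
      have hmin' := hmin _ hsph
      have hhom : F (‖v‖⁻¹ • v) = ‖v‖⁻¹ * (‖v‖⁻¹ * F v) := by
        simp [hF, Matrix.mulVec_smul, smul_dotProduct, dotProduct_smul,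
          smul_eq_mul]
      have hFv : F u * ‖v‖ ^ 2 ≤ F v := by
        rw [hhom] at hmin'
        have h3 : F u * ‖v‖ ^ 2 ≤ (‖v‖⁻¹ * (‖v‖⁻¹ * F v)) * ‖v‖ ^ 2 :=
          mul_le_mul_of_nonneg_right hmin' (by positivity)
        calc F u * ‖v‖ ^ 2 ≤ _ := h3
          _ = F v := by field_simp [sq]
      have hsum : ∑ i, v i ^ 2 ≤ N * ‖v‖ ^ 2 := by
        have : ∀ i, v i ^ 2 ≤ ‖v‖ ^ 2 := fun i => by
          have h1 : |v i| ≤ ‖v‖ := by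
            simpa using norm_le_pi_norm v i
          calc v i ^ 2 = |v i| ^ 2 := (sq_abs _).symm
            _ ≤ ‖v‖ ^ 2 := by nlinarith [abs_nonneg (v i)]
        calc ∑ i, v i ^ 2 ≤ ∑ _i : n, ‖v‖ ^ 2 := Finset.sum_le_sum fun i _ => this i
          _ = N * ‖v‖ ^ 2 := by simp [hN, Finset.sum_const, nsmul_eq_mul]
      calc F u / N * ∑ i, v i ^ 2 ≤ F u / N * (N * ‖v‖ ^ 2) :=
            mul_le_mul_of_nonneg_left hsum (by positivity)
        _ = F u * ‖v‖ ^ 2 := by field_simp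
        _ ≤ F v := hFv

open Matrix

/-- **Absolute summability of the theta series with characteristics.**
For every symmetric `g × g` complex matrix `τ` whose imaginary part is positive
definite, every `z ∈ ℂ^g` and characteristics `a, b ∈ ℝ^g`, the family
`m ↦ exp(iπ (m+a)ᵀ τ (m+a) + 2πi (m+a)ᵀ (z+b))`, indexed by `m ∈ ℤ^g`, is
summable in `ℂ`. -/
theorem theta_series_summable (g : ℕ) (τ : Matrix (Fin g) (Fin g) ℂ)
    (hsym : τ.IsSymm) (hpos : (τ.map Complex.im).PosDef)
    (z : Fin g → ℂ) (a b : Fin g → ℝ) :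
    Summable (fun m : Fin g → ℤ =>
      Complex.exp ((Real.pi : ℂ) * Complex.I *
          dotProduct (fun i => (m i : ℂ) + (a i : ℂ))
            (τ.mulVec fun i => (m i : ℂ) + (a i : ℂ)) +
        2 * (Real.pi : ℂ) * Complex.I *
          dotProduct (fun i => (m i : ℂ) + (a i : ℂ))
            (fun i => z i + (b i : ℂ)))) := by
  obtain ⟨c, hc, hlow⟩ := theta_posdef_lower_bound hpos
  set M : ℝ := (∑ i, |(z i).im|) + 1 with hM
  have hM0 : 0 < M := by
    have : (0:ℝ) ≤ ∑ i, |(z i).im| := Finset.sum_nonneg fun i _ => abs_nonneg _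
    linarith
  have hMi : ∀ i, |(z i).im| ≤ M := fun i => by
    have h1 : |(z i).im| ≤ ∑ j, |(z j).im| :=
      Finset.single_le_sum (f := fun j => |(z j).im|) (fun j _ => abs_nonneg _) (Finset.mem_univ i)
    linarith
  set f : Fin g → ℤ → ℝ := fun i n =>
    Real.exp (-(Real.pi * c) * ((n : ℝ) + a i) ^ 2 + (2 * Real.pi * M) * |(n : ℝ) + a i|)
    with hf
  have hf0 : ∀ i n, 0 ≤ f i n := fun i n => (Real.exp_pos _).le
  have hfs : ∀ i, Summable (f i) := fun i =>
    theta_aux_int _ _ _ (mul_pos Real.pi_pos hc)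
  refine Summable.of_norm_bounded (theta_summable_pi_prod f hf0 hfs) (fun m => ?_)
  set vR : Fin g → ℝ := fun i => (m i : ℝ) + a i with hvR
  have hcast : (fun i => (m i : ℂ) + (a i : ℂ)) = fun i => ((vR i : ℝ) : ℂ) := by
    funext i; simp [hvR]
  rw [Complex.norm_exp, hcast]
  -- imaginary parts of the two dot products
  have him1 : ((fun i => (vR i : ℂ)) ⬝ᵥ τ.mulVec fun i => (vR i : ℂ)).im
      = vR ⬝ᵥ (τ.map Complex.im).mulVec vR := by
    simp [dotProduct, Matrix.mulVec, Complex.im_sum, Complex.mul_im,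
      Complex.re_sum, Matrix.map_apply, Finset.mul_sum]
  have him2 : ((fun i => (vR i : ℂ)) ⬝ᵥ fun i => z i + (b i : ℂ)).im
      = ∑ i, vR i * (z i).im := by
    simp [dotProduct, Complex.im_sum, Complex.mul_im, Complex.add_im]
  have hre1 : ∀ w : ℂ, ((Real.pi : ℂ) * Complex.I * w).re = -Real.pi * w.im := by
    intro w; simp [Complex.mul_re, Complex.mul_im]
  have hre2 : ∀ w : ℂ, (2 * (Real.pi : ℂ) * Complex.I * w).re
      = -(2 * Real.pi) * w.im := by
    intro w; simp [Complex.mul_re, Complex.mul_im]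
  rw [Complex.add_re, hre1, hre2, him1, him2]
  -- bound the real part
  have hQ : c * ∑ i, vR i ^ 2 ≤ vR ⬝ᵥ (τ.map Complex.im).mulVec vR := hlow vR
  have hL : -(M * ∑ i, |vR i|) ≤ ∑ i, vR i * (z i).im := by
    rw [neg_le, ← Finset.sum_neg_distrib, Finset.mul_sum]
    refine Finset.sum_le_sum fun i _ => ?_
    have h1 : -(vR i * (z i).im) ≤ |vR i * (z i).im| := neg_le_abs _
    have h2 : |vR i * (z i).im| = |vR i| * |(z i).im| := abs_mul _ _
    have h3 : |vR i| * |(z i).im| ≤ |vR i| * M :=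
      mul_le_mul_of_nonneg_left (hMi i) (abs_nonneg _)
    calc -(vR i * (z i).im) ≤ |vR i| * |(z i).im| := by rw [← h2]; exact h1
      _ ≤ |vR i| * M := h3
      _ = M * |vR i| := mul_comm _ _
  have hbound : -Real.pi * (vR ⬝ᵥ (τ.map Complex.im).mulVec vR)
      + -(2 * Real.pi) * (∑ i, vR i * (z i).im)
      ≤ ∑ i, (-(Real.pi * c) * vR i ^ 2 + (2 * Real.pi * M) * |vR i|) := by
    have hπ : (0:ℝ) < Real.pi := Real.pi_pos
    have t1 : -Real.pi * (vR ⬝ᵥ (τ.map Complex.im).mulVec vR)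
        ≤ -Real.pi * (c * ∑ i, vR i ^ 2) := by
      have := hQ; nlinarith
    have t2 : -(2 * Real.pi) * (∑ i, vR i * (z i).im)
        ≤ (2 * Real.pi) * (M * ∑ i, |vR i|) := by
      have := hL; nlinarith
    have heqs : -Real.pi * (c * ∑ i, vR i ^ 2) + (2 * Real.pi) * (M * ∑ i, |vR i|)
        = ∑ i, (-(Real.pi * c) * vR i ^ 2 + (2 * Real.pi * M) * |vR i|) := by
      rw [Finset.sum_add_distrib, ← Finset.mul_sum, ← Finset.mul_sum]
      ring
    linarith
  calc Real.exp (-Real.pi * (vR ⬝ᵥ (τ.map Complex.im).mulVec vR)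
        + -(2 * Real.pi) * (∑ i, vR i * (z i).im))
      ≤ Real.exp (∑ i, (-(Real.pi * c) * vR i ^ 2 + (2 * Real.pi * M) * |vR i|)) :=
        Real.exp_le_exp.2 hbound
    _ = ∏ i, f i (m i) := by
        rw [Real.exp_sum]
end

section
/- (Giambelli's formula) Let λ be a partition of rank r with Frobenius coordinates (α₁, …, α_r | β₁, …, β_r). Then the Schur polynomial of λ equals the r×r determinant of hook Schur polynomials: s_λ(x) = det( s_{(αᵢ|βⱼ)}(x) )_{1≤i,j≤r}, as an identity of polynomials in x₁, x₂, x₃, … over ℚ. -/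
open MvPolynomial

/-- The elementary Schur polynomials `p_m(x₁, x₂, …)`, defined by the generating
series `∑_{m≥0} p_m(x) tᵐ = exp(∑_{n≥1} xₙ tⁿ)` (the coefficient of `tᵐ` only
involves the terms with `k ≤ m` and `n ≤ m`, so the series may be truncated).
The variable `X n` of `MvPolynomial ℕ ℚ` stands for `xₙ` (`X 0` is unused). -/
noncomputable def elemSchur (m : ℕ) : MvPolynomial ℕ ℚ :=
  PowerSeries.coeff (R := MvPolynomial ℕ ℚ) m
    (∑ k ∈ Finset.range (m + 1),
      ((Nat.factorial k : ℚ)⁻¹) •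
        ((∑ n ∈ Finset.Icc 1 m,
          PowerSeries.monomial (R := MvPolynomial ℕ ℚ) n (MvPolynomial.X n)) ^ k))

/-- `p_k` for an integer index, with `p_k = 0` for `k < 0`. -/
noncomputable def elemSchurZ (k : ℤ) : MvPolynomial ℕ ℚ :=
  if 0 ≤ k then elemSchur k.toNat else 0

/-- The Schur polynomial `s_λ(x) = det(p_{λᵢ−i+j}(x))_{1≤i,j≤ℓ}` of a partition
`λ = (λ₁, …, λ_ℓ)` (Jacobi–Trudi form); indices `i, j` here are 0-based. -/
noncomputable def schurPoly {ℓ : ℕ} (lam : Fin ℓ → ℕ) : MvPolynomial ℕ ℚ :=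
  Matrix.det (Matrix.of fun i j : Fin ℓ =>
    elemSchurZ ((lam i : ℤ) - (i : ℤ) + (j : ℤ)))

/-- The Schur polynomial of the hook `(α|β) = (α+1, 1^β)` (Frobenius notation). -/
noncomputable def hookSchur (a b : ℕ) : MvPolynomial ℕ ℚ :=
  schurPoly (fun i : Fin (b + 1) => if i = 0 then a + 1 else 1)

lemma elemSchur_zero : elemSchur 0 = 1 := by
  simp [elemSchur]

lemma elemSchurZ_zero : elemSchurZ 0 = 1 := by
  simp [elemSchurZ, elemSchur_zero]

lemma elemSchurZ_neg {k : ℤ} (h : k < 0) : elemSchurZ k = 0 := by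
  simp [elemSchurZ, not_le.2 h]

noncomputable def Bmat (ℓ : ℕ) : Matrix (Fin ℓ) (Fin ℓ) (MvPolynomial ℕ ℚ) :=
  Matrix.of fun i j : Fin ℓ => elemSchurZ ((j : ℤ) - (i : ℤ))

lemma Bmat_det (ℓ : ℕ) : (Bmat ℓ).det = 1 := by
  rw [Matrix.det_of_upperTriangular]
  · simp only [Bmat, Matrix.of_apply, sub_self, elemSchurZ_zero, Finset.prod_const_one]
  · intro i j hij
    simp only [Bmat, Matrix.of_apply]
    have : (j:ℕ) < (i:ℕ) := hij
    exact elemSchurZ_neg (by omega)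

lemma Bmat_isUnit_det (ℓ : ℕ) : IsUnit (Bmat ℓ).det := by
  rw [Bmat_det]; exact isUnit_one

lemma Bmat_mul_inv (ℓ : ℕ) : Bmat ℓ * (Bmat ℓ)⁻¹ = 1 :=
  Matrix.mul_nonsing_inv _ (Bmat_isUnit_det ℓ)

lemma Bmat_inv_det (ℓ : ℕ) : (Bmat ℓ)⁻¹.det = 1 := by
  rw [Matrix.det_nonsing_inv, Bmat_det, Ring.inverse_one]

lemma det_replace {A : Type*} [CommRing A] {L r : ℕ} (p : Fin r → Fin L) (hp : Function.Injective p)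
    (X : Matrix (Fin L) (Fin L) A) (V : Fin r → Fin L → A)
    (hrow : ∀ i m, X (p i) m = V i m)
    (hid : ∀ x m, (∀ i, p i ≠ x) → X x m = if x = m then 1 else 0) :
    X.det = Matrix.det (Matrix.of fun i j : Fin r => V i (p j)) := by
  classical
  have hrL : r ≤ L := by
    simpa using Fintype.card_le_of_injective p hp
  set s : Finset (Fin L) := Finset.univ \ Finset.image p Finset.univ with hs_def
  have hs : s.card = L - r := by
    rw [hs_def, Finset.card_sdiff_of_subset (Finset.subset_univ _), Finset.card_image_of_injective _ hp]
    simp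
  set g : Fin (L - r) → Fin L := fun x => s.orderEmbOfFin hs x with hg_def
  have hgs : ∀ x, g x ∈ s := fun x => s.orderEmbOfFin_mem hs x
  have hgnotp : ∀ x i, p i ≠ g x := by
    intro x i h
    have := hgs x
    rw [hs_def, Finset.mem_sdiff] at this
    exact this.2 (Finset.mem_image.2 ⟨i, Finset.mem_univ _, h⟩)
  have hginj : Function.Injective g := fun a b h => (s.orderEmbOfFin hs).injective h
  have hinj : Function.Injective (Sum.elim p g) :=
    hp.sumElim hginj (fun a b => hgnotp b a)
  have hbij : Function.Bijective (Sum.elim p g) := by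
    refine (Fintype.bijective_iff_injective_and_card _).2 ⟨hinj, by simp; omega⟩
  set e : (Fin r ⊕ Fin (L - r)) ≃ Fin L := Equiv.ofBijective _ hbij with he_def
  have he1 : ∀ i, e (Sum.inl i) = p i := fun i => rfl
  have he2 : ∀ x, e (Sum.inr x) = g x := fun x => rfl
  have key : X.submatrix e e =
      Matrix.fromBlocks (Matrix.of fun i j : Fin r => V i (p j))
        (Matrix.of fun i x => V i (g x)) 0 1 := by
    ext a b
    cases a with
    | inl i =>
      cases b with
      | inl j => simp [Matrix.submatrix_apply, he1, hrow]
      | inr y => simp [Matrix.submatrix_apply, he1, he2, hrow]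
    | inr x =>
      cases b with
      | inl j =>
        have := hid (g x) (p j) (fun i => hgnotp x i)
        simp [Matrix.submatrix_apply, he1, he2, this, (hgnotp x j).symm,
          (Ne.symm (hgnotp x j) : g x ≠ p j)]
      | inr y =>
        have := hid (g x) (g y) (fun i => hgnotp x i)
        simp [Matrix.submatrix_apply, he2, this, Matrix.one_apply, hginj.eq_iff]
  calc X.det = (X.submatrix e e).det := (Matrix.det_submatrix_equiv_self e X).symm
    _ = _ := by rw [key, Matrix.det_fromBlocks_zero₂₁]; simp

lemma key_perm : ∀ (r ℓ : ℕ) (hr : r ≤ ℓ) (f : Fin ℓ → Fin ℓ)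
    (hinj : Function.Injective f)
    (hhead : ∀ a b : Fin ℓ, (a : ℕ) < (b : ℕ) → (b : ℕ) < r → f b < f a)
    (htail : ∀ a b : Fin ℓ, r ≤ (a : ℕ) → (a : ℕ) < (b : ℕ) → f a < f b),
    ∃ τ : Equiv.Perm (Fin ℓ), ⇑τ = f ∧
      (Equiv.Perm.sign τ : ℤ) = (-1) ^ (∑ i : Fin r, (f (Fin.castLE hr i) : ℕ)) := by
  intro r
  induction r with
  | zero =>
    intro ℓ hr f hinj hhead htail
    have hmono : StrictMono f := fun a b hab => htail a b (Nat.zero_le _) hab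
    have hbij : Function.Bijective f :=
      (Fintype.bijective_iff_injective_and_card f).2 ⟨hinj, rfl⟩
    have hfid : f = id := by
      haveI : WellFoundedLT (Fin ℓ) := inferInstance
      refine (StrictMono.range_inj (β := Fin ℓ) (γ := Fin ℓ) hmono
        (strictMono_id : StrictMono (id : Fin ℓ → Fin ℓ))).1 ?_
      simp [Set.range_id, Set.range_eq_univ.2 hbij.surjective]
    exact ⟨Equiv.refl _, by simp [hfid], by simp⟩
  | succ r IH =>
    intro ℓ hr f hinj hhead htail
    obtain ⟨n, rfl⟩ : ∃ n, ℓ = n + 1 := ⟨ℓ - 1, by omega⟩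
    set m : Fin (n + 1) := f 0 with hm_def
    have hdec : ∀ k : ℕ, ∀ hk : k < r + 1, (f ⟨k, lt_of_lt_of_le hk hr⟩ : ℕ) + k ≤ (m : ℕ) := by
      intro k
      induction k with
      | zero => intro hk; simp [hm_def]
      | succ k ihk =>
        intro hk
        have h1 := ihk (by omega)
        have h2 : f ⟨k + 1, lt_of_lt_of_le hk hr⟩ < f ⟨k, by omega⟩ :=
          hhead _ _ (by simp) (by simpa using hk)
        have := Fin.lt_iff_val_lt_val.mp h2
        omega
    have hmr : r ≤ (m : ℕ) := by
      have := hdec r (by omega)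
      omega
    -- claim (i): tail positions ≤ m map below f 0
    have claim1 : ∀ k : Fin (n + 1), r + 1 ≤ (k : ℕ) → (k : ℕ) ≤ (m : ℕ) → f k < f 0 := by
      intro k hk1 hk2
      by_contra hcon
      have hne : f k ≠ f 0 := fun h => by
        have h0 := hinj h
        rw [h0] at hk1; simp at hk1
      have hgt : f 0 < f k := lt_of_le_of_ne (not_lt.1 hcon) (Ne.symm hne)
      -- S = insert 0 (Ici k) maps injectively into Ici (f 0)
      have hmaps : ∀ x ∈ insert (0 : Fin (n+1)) (Finset.Ici k), f x ∈ Finset.Ici (f 0) := by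
        intro x hx
        rcases Finset.mem_insert.1 hx with rfl | hx
        · exact Finset.mem_Ici.2 le_rfl
        · rcases eq_or_lt_of_le (Finset.mem_Ici.1 hx) with rfl | hlt
          · exact Finset.mem_Ici.2 hgt.le
          · exact Finset.mem_Ici.2 (hgt.trans (htail k x (by omega) hlt)).le
      have hcard : (Finset.Ici (f 0)).card < (insert (0 : Fin (n+1)) (Finset.Ici k)).card := by
        rw [Finset.card_insert_of_notMem (by simp only [Finset.mem_Ici, Fin.le_def, Fin.val_zero]; omega), Fin.card_Ici, Fin.card_Ici]
        rw [← hm_def]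
        omega
      obtain ⟨a, ha, b, hb, hab, heq⟩ :=
        Finset.exists_ne_map_eq_of_card_lt_of_maps_to hcard hmaps
      exact hab (hinj heq)
    -- claim (ii): tail positions > m map above f 0
    have claim2 : ∀ k : Fin (n + 1), r + 1 ≤ (k : ℕ) → (m : ℕ) < (k : ℕ) → f 0 < f k := by
      intro k hk1 hk2
      by_contra hcon
      have hne : f k ≠ f 0 := fun h => by
        have h0 := hinj h
        rw [h0] at hk1; simp at hk1
      have hlt : f k < f 0 := lt_of_le_of_ne (not_lt.1 hcon) hne
      have hmaps : ∀ x ∈ Finset.Icc (⟨1, by omega⟩ : Fin (n+1)) k, f x ∈ Finset.Iio (f 0) := by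
        intro x hx
        rw [Finset.mem_Icc] at hx
        obtain ⟨hx1, hx2⟩ := hx
        rcases lt_or_ge (x : ℕ) (r + 1) with hxr | hxr
        · refine Finset.mem_Iio.2 (hhead 0 x ?_ hxr)
          have h1x : 1 ≤ (x : ℕ) := Fin.le_def.mp hx1
          simp only [Fin.val_zero]
          omega
        · rcases eq_or_lt_of_le hx2 with rfl | hx2
          · exact Finset.mem_Iio.2 hlt
          · exact Finset.mem_Iio.2 ((htail x k hxr hx2).trans hlt)
      have hcard : (Finset.Iio (f 0)).card < (Finset.Icc (⟨1, by omega⟩ : Fin (n+1)) k).card := by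
        have hk2' : ((f 0 : Fin (n+1)) : ℕ) < (k : ℕ) := hk2
        have hv : ((⟨1, by omega⟩ : Fin (n+1)) : ℕ) = 1 := rfl
        rw [Fin.card_Iio, Fin.card_Icc, hv]
        omega
      obtain ⟨a, ha, b, hb, hab, heq⟩ :=
        Finset.exists_ne_map_eq_of_card_lt_of_maps_to hcard hmaps
      exact hab (hinj heq)
    -- the shifted function
    set f' : Fin (n+1) → Fin (n+1) := fun x => f (Fin.cycleRange m x) with hf'_def
    have hr' : r ≤ n + 1 := by omega
    have hcyc_lt : ∀ x : Fin (n+1), (x : ℕ) < (m : ℕ) → ((Fin.cycleRange m x : Fin (n+1)) : ℕ) = (x : ℕ) + 1 := by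
      intro x hx
      exact Fin.coe_cycleRange_of_lt (by rwa [Fin.lt_iff_val_lt_val])
    have hcyc_gt : ∀ x : Fin (n+1), (m : ℕ) < (x : ℕ) → Fin.cycleRange m x = x := by
      intro x hx
      exact Fin.cycleRange_of_gt (by rwa [Fin.lt_iff_val_lt_val])
    have hinj' : Function.Injective f' := hinj.comp (Fin.cycleRange m).injective
    have hhead' : ∀ a b : Fin (n+1), (a : ℕ) < (b : ℕ) → (b : ℕ) < r → f' b < f' a := by
      intro a b hab hbr
      have hbm : (b : ℕ) < (m : ℕ) := by omega
      have ham : (a : ℕ) < (m : ℕ) := by omega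
      refine hhead _ _ ?_ ?_
      · rw [hcyc_lt a ham, hcyc_lt b hbm]; omega
      · rw [hcyc_lt b hbm]; omega
    have htail' : ∀ a b : Fin (n+1), r ≤ (a : ℕ) → (a : ℕ) < (b : ℕ) → f' a < f' b := by
      intro a b har hab
      rcases lt_trichotomy ((a : ℕ)) ((m : ℕ)) with ham | ham | ham
      · rcases lt_trichotomy ((b : ℕ)) ((m : ℕ)) with hbm | hbm | hbm
        · exact htail _ _ (by rw [hcyc_lt a ham]; omega) (by rw [hcyc_lt a ham, hcyc_lt b hbm]; omega)
        · have hbm' : b = m := Fin.ext hbm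
          subst hbm'
          rw [hf'_def]
          simp only [Fin.cycleRange_self]
          exact claim1 _ (by rw [hcyc_lt a ham]; omega) (by rw [hcyc_lt a ham]; omega)
        · rw [hf'_def]
          simp only [hcyc_gt b hbm]
          exact htail _ _ (by rw [hcyc_lt a ham]; omega) (by rw [hcyc_lt a ham]; omega)
      · have ham' : a = m := Fin.ext ham
        subst ham'
        rw [hf'_def]
        simp only [Fin.cycleRange_self, hcyc_gt b (by omega)]
        exact claim2 _ (by omega) (by omega)
      · rw [hf'_def]
        simp only [hcyc_gt a (by omega), hcyc_gt b (by omega)]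
        exact htail _ _ (by omega) (by omega)
    obtain ⟨τ', hτ'f, hτ'sign⟩ := IH (n+1) hr' f' hinj' hhead' htail'
    refine ⟨τ' * (Fin.cycleRange m)⁻¹, ?_, ?_⟩
    · funext x
      have : τ' ((Fin.cycleRange m)⁻¹ x) = f' ((Fin.cycleRange m)⁻¹ x) := by rw [hτ'f]
      simp only [Equiv.Perm.mul_apply, this, hf'_def]
      rw [← Equiv.Perm.mul_apply, mul_inv_cancel, Equiv.Perm.one_apply]
    · have hsum : ∑ i : Fin (r+1), (f (Fin.castLE hr i) : ℕ)
          = (m : ℕ) + ∑ i : Fin r, (f' (Fin.castLE hr' i) : ℕ) := by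
        rw [Fin.sum_univ_succ]
        have h0 : (Fin.castLE hr (0 : Fin (r+1))) = (0 : Fin (n+1)) := by
          apply Fin.ext; simp
        congr 1
        apply Finset.sum_congr rfl
        intro i _
        have hkey : Fin.cycleRange m (Fin.castLE hr' i) = Fin.castLE hr i.succ := by
          apply Fin.ext
          rw [hcyc_lt _ (by simp only [Fin.coe_castLE]; omega)]
          simp
        rw [hf'_def]
        simp only [hkey]
      rw [hsum, map_mul, Equiv.Perm.sign_inv, Fin.sign_cycleRange]
      push_cast
      rw [hτ'sign]
      ring

lemma core (ℓ r : ℕ) (hr : r ≤ ℓ) (lam : Fin ℓ → ℕ) (q : Fin r → Fin ℓ)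
    (hq : ∀ i j : Fin r, i < j → q j < q i)
    (hlam : ∀ k : Fin ℓ, r ≤ (k : ℕ) → lam k ≤ (k : ℕ))
    (hcross : ∀ (j : Fin r) (k : Fin ℓ), r ≤ (k : ℕ) → ((q j : ℕ) ≠ (k : ℕ) - lam k))
    (htm : ∀ k k' : Fin ℓ, r ≤ (k : ℕ) → (k : ℕ) < (k' : ℕ) →
      (k : ℕ) - lam k < (k' : ℕ) - lam k') :
    schurPoly lam = (-1 : MvPolynomial ℕ ℚ) ^ (∑ j : Fin r, (q j : ℕ)) *
      Matrix.det (Matrix.of fun i j : Fin r =>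
        ∑ k : Fin ℓ, elemSchurZ ((lam (Fin.castLE hr i) : ℤ) - ((Fin.castLE hr i : Fin ℓ) : ℤ)
          + (k : ℤ)) * (Bmat ℓ)⁻¹ k (q j)) := by
  classical
  set f : Fin ℓ → Fin ℓ := fun k =>
    if h : (k : ℕ) < r then q ⟨(k : ℕ), h⟩ else ⟨(k : ℕ) - lam k, by omega⟩ with hf_def
  have hfhead : ∀ i : Fin r, f (Fin.castLE hr i) = q i := by
    intro i
    rw [hf_def]
    simp only [Fin.coe_castLE]
    rw [dif_pos i.2]
  have hftail : ∀ k : Fin ℓ, r ≤ (k : ℕ) → (f k : ℕ) = (k : ℕ) - lam k := by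
    intro k hk
    rw [hf_def]
    simp only []
    rw [dif_neg (by omega)]
  have hqinj : Function.Injective q := by
    intro a b hab
    rcases lt_trichotomy a b with h | h | h
    · exact absurd hab (ne_of_gt (hq a b h))
    · exact h
    · exact absurd hab (ne_of_lt (hq b a h))
  have hinj : Function.Injective f := by
    intro a b hab
    rcases lt_or_ge ((a : ℕ)) r with ha | ha <;> rcases lt_or_ge ((b : ℕ)) r with hb | hb
    · have h1 : f a = q ⟨a, ha⟩ := by rw [hf_def]; simp only []; rw [dif_pos ha]
      have h2 : f b = q ⟨b, hb⟩ := by rw [hf_def]; simp only []; rw [dif_pos hb]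
      rw [h1, h2] at hab
      have := hqinj hab
      exact Fin.ext (congrArg Fin.val this : ((⟨a, ha⟩ : Fin r) : ℕ) = _)
    · exfalso
      have h1 : f a = q ⟨a, ha⟩ := by rw [hf_def]; simp only []; rw [dif_pos ha]
      have h2 := hftail b hb
      exact hcross ⟨a, ha⟩ b hb (by rw [← h2, ← hab, h1])
    · exfalso
      have h1 : f b = q ⟨b, hb⟩ := by rw [hf_def]; simp only []; rw [dif_pos hb]
      have h2 := hftail a ha
      exact hcross ⟨b, hb⟩ a ha (by rw [← h2, hab, h1])
    · have h1 := hftail a ha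
      have h2 := hftail b hb
      have hv : (a : ℕ) - lam a = (b : ℕ) - lam b := by rw [← h1, ← h2, hab]
      rcases lt_trichotomy ((a : ℕ)) ((b : ℕ)) with h | h | h
      · exact absurd hv (ne_of_lt (htm a b ha h))
      · exact Fin.ext h
      · exact absurd hv.symm (ne_of_lt (htm b a hb h))
  have hhead : ∀ a b : Fin ℓ, (a : ℕ) < (b : ℕ) → (b : ℕ) < r → f b < f a := by
    intro a b hab hbr
    have h1 : f a = q ⟨a, by omega⟩ := by rw [hf_def]; simp only []; rw [dif_pos (by omega)]
    have h2 : f b = q ⟨b, hbr⟩ := by rw [hf_def]; simp only []; rw [dif_pos hbr]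
    rw [h1, h2]
    exact hq _ _ (by rw [Fin.lt_iff_val_lt_val]; exact hab)
  have htail : ∀ a b : Fin ℓ, r ≤ (a : ℕ) → (a : ℕ) < (b : ℕ) → f a < f b := by
    intro a b har hab
    rw [Fin.lt_iff_val_lt_val, hftail a har, hftail b (by omega)]
    exact htm a b har hab
  obtain ⟨τ, hτ, hsign⟩ := key_perm r ℓ hr f hinj hhead htail
  set JT : Matrix (Fin ℓ) (Fin ℓ) (MvPolynomial ℕ ℚ) :=
    Matrix.of fun i j : Fin ℓ => elemSchurZ ((lam i : ℤ) - (i : ℤ) + (j : ℤ)) with hJT_def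
  set X : Matrix (Fin ℓ) (Fin ℓ) (MvPolynomial ℕ ℚ) := JT.submatrix τ.symm id with hX_def
  have hXJT : JT = X.submatrix τ id := by
    rw [hX_def]
    ext i j
    simp [Matrix.submatrix_apply]
  set Y : Matrix (Fin ℓ) (Fin ℓ) (MvPolynomial ℕ ℚ) := X * (Bmat ℓ)⁻¹ with hY_def
  have hdetXY : X.det = Y.det := by
    rw [hY_def, Matrix.det_mul, Bmat_inv_det, mul_one]
  have hrowY : ∀ (i : Fin r) (mcol : Fin ℓ), Y (q i) mcol =
      ∑ k : Fin ℓ, elemSchurZ ((lam (Fin.castLE hr i) : ℤ) - ((Fin.castLE hr i : Fin ℓ) : ℤ)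
        + (k : ℤ)) * (Bmat ℓ)⁻¹ k mcol := by
    intro i mcol
    have hsymm : τ.symm (q i) = Fin.castLE hr i := by
      apply τ.injective
      rw [Equiv.apply_symm_apply]
      rw [hτ]
      exact (hfhead i).symm
    rw [hY_def, Matrix.mul_apply]
    apply Finset.sum_congr rfl
    intro k _
    rw [hX_def]
    simp only [Matrix.submatrix_apply, id_eq, hsymm, hJT_def, Matrix.of_apply]
  have hidY : ∀ x mcol, (∀ i : Fin r, q i ≠ x) → Y x mcol = if x = mcol then 1 else 0 := by
    intro x mcol hx
    have hks : r ≤ ((τ.symm x : Fin ℓ) : ℕ) := by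
      by_contra hcon
      push_neg at hcon
      apply hx ⟨(τ.symm x : Fin ℓ), hcon⟩
      have hfx : f (τ.symm x) = x := by rw [← hτ]; exact Equiv.apply_symm_apply τ x
      have hfq : f (τ.symm x) = q ⟨(τ.symm x : Fin ℓ), hcon⟩ := by
        simp only [hf_def]
        rw [dif_pos hcon]
      exact hfq.symm.trans hfx
    have hXB : ∀ c : Fin ℓ, X x c = Bmat ℓ x c := by
      intro c
      rw [hX_def]
      simp only [Matrix.submatrix_apply, id_eq, hJT_def, Matrix.of_apply, Bmat]
      congr 1
      have hval : (x : ℕ) = ((τ.symm x : Fin ℓ) : ℕ) - lam (τ.symm x) := by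
        rw [← hftail (τ.symm x) hks]
        congr 1
        rw [← hτ]
        exact (Equiv.apply_symm_apply τ x).symm
      have hle := hlam (τ.symm x) hks
      omega
    have : Y x mcol = (Bmat ℓ * (Bmat ℓ)⁻¹) x mcol := by
      rw [hY_def, Matrix.mul_apply, Matrix.mul_apply]
      exact Finset.sum_congr rfl fun k _ => by rw [hXB k]
    rw [this, Bmat_mul_inv, Matrix.one_apply]
  have hdetY := det_replace q hqinj Y _ hrowY hidY
  have hperm : JT.det = (Equiv.Perm.sign τ : ℤ) * X.det := by
    rw [hXJT]
    rw [Matrix.det_permute]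
  have hsum : ∑ i : Fin r, (f (Fin.castLE hr i) : ℕ) = ∑ j : Fin r, (q j : ℕ) := by
    apply Finset.sum_congr rfl
    intro i _
    rw [hfhead i]
  have : schurPoly lam = ((Equiv.Perm.sign τ : ℤ) : MvPolynomial ℕ ℚ) * X.det := by
    rw [schurPoly, ← hJT_def]
    exact hperm
  rw [this, hdetXY, hdetY, hsign, hsum]
  push_cast
  ring

lemma schurPoly_snoc (Lc : ℕ) (g : Fin (Lc + 1) → ℕ) (hlast : g (Fin.last Lc) = 0) :
    schurPoly g = schurPoly (fun i : Fin Lc => g i.castSucc) := by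
  rw [schurPoly, schurPoly]
  rw [Matrix.det_succ_row _ (Fin.last Lc)]
  rw [Finset.sum_eq_single (Fin.last Lc)]
  · simp only [Matrix.of_apply, Fin.succAbove_last, Fin.val_last, hlast, Nat.cast_zero]
    rw [show (0 : ℤ) - (Lc : ℤ) + (Lc : ℤ) = 0 by ring, elemSchurZ_zero, mul_one,
      Even.neg_one_pow (⟨Lc, rfl⟩ : Even (Lc + Lc)), one_mul]
    rfl
  · intro j _ hj
    have hjlt : (j : ℕ) < Lc := Fin.val_lt_last hj
    have hz : elemSchurZ ((g (Fin.last Lc) : ℤ) - ((Fin.last Lc : Fin (Lc+1)) : ℤ) + (j : ℤ)) = 0 := by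
      rw [hlast]
      apply elemSchurZ_neg
      simp only [Fin.val_last]
      push_cast
      omega
    simp only [Matrix.of_apply, hz, mul_zero, zero_mul]
  · intro h
    exact absurd (Finset.mem_univ _) h

lemma schurPoly_pad (n : ℕ) (lam : Fin n → ℕ) :
    ∀ t : ℕ, schurPoly (fun i : Fin (n + t) =>
      if h : (i : ℕ) < n then lam ⟨(i : ℕ), h⟩ else 0) = schurPoly lam := by
  intro t
  induction t with
  | zero =>
    congr 1
    funext i
    have h : (i : ℕ) < n := by have := i.2; omega
    rw [dif_pos h]
    rfl
  | succ t iht =>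
    have hstep := schurPoly_snoc (n + t)
      (fun i : Fin (n + t + 1) => if h : (i : ℕ) < n then lam ⟨(i : ℕ), h⟩ else 0)
      (by beta_reduce; rw [dif_neg (by simp only [Fin.val_last]; omega)])
    have h2 : schurPoly (fun i : Fin (n + t) =>
        (fun i : Fin (n + t + 1) => if h : (i : ℕ) < n then lam ⟨(i : ℕ), h⟩ else 0) i.castSucc)
        = schurPoly (fun i : Fin (n + t) => if h : (i : ℕ) < n then lam ⟨(i : ℕ), h⟩ else 0) := by
      congr 1
    exact hstep.trans (h2.trans iht)

lemma hook_eval (ℓ a b : ℕ) (hb : b < ℓ) :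
    hookSchur a b = (-1 : MvPolynomial ℕ ℚ) ^ b *
      ∑ k : Fin ℓ, elemSchurZ ((a : ℤ) + 1 + (k : ℤ)) * (Bmat ℓ)⁻¹ k ⟨b, hb⟩ := by
  obtain ⟨t, rfl⟩ : ∃ t, ℓ = (b + 1) + t := ⟨ℓ - (b + 1), by omega⟩
  set hl : Fin (b + 1) → ℕ := fun i => if i = 0 then a + 1 else 1 with hhl
  set hpad : Fin (b + 1 + t) → ℕ := fun i =>
    if h : (i : ℕ) < b + 1 then hl ⟨(i : ℕ), h⟩ else 0 with hhpad
  have hpad_eval : ∀ k : Fin (b + 1 + t), hpad k =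
      if (k : ℕ) = 0 then a + 1 else if (k : ℕ) < b + 1 then 1 else 0 := by
    intro k
    rw [hhpad]
    beta_reduce
    by_cases h0 : (k : ℕ) = 0
    · rw [if_pos h0, dif_pos (by omega), hhl]
      beta_reduce
      rw [if_pos (Fin.ext (by simpa using h0))]
    · rw [if_neg h0]
      rcases lt_or_ge ((k : ℕ)) (b + 1) with h | h
      · rw [dif_pos h, if_pos h, hhl]
        beta_reduce
        rw [if_neg (fun hcon => h0 (by simpa using congrArg Fin.val hcon))]
      · rw [dif_neg (by omega), if_neg (by omega)]
  have hq0 : ∀ j : Fin 1, (((fun _ : Fin 1 => (⟨b, by omega⟩ : Fin (b + 1 + t))) j : Fin (b+1+t)) : ℕ) = b := by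
    intro j; rfl
  have h1 : hookSchur a b = schurPoly hpad := by
    rw [hookSchur, ← schurPoly_pad (b + 1) hl t]
  have h2 := core (b + 1 + t) 1 (by omega) hpad (fun _ => ⟨b, by omega⟩)
    (by intro i j hij; have hi := i.2; have hj := j.2
        have := Fin.lt_iff_val_lt_val.mp hij; omega)
    (by intro k hk
        rw [hpad_eval]
        rw [if_neg (show ¬((k : ℕ) = 0) by omega)]
        rcases lt_or_ge ((k : ℕ)) (b + 1) with h | h
        · rw [if_pos h]; omega
        · rw [if_neg (by omega)]; omega)
    (by intro j k hk
        rw [hpad_eval]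
        rw [if_neg (show ¬((k : ℕ) = 0) by omega)]
        show (b : ℕ) ≠ _
        rcases lt_or_ge ((k : ℕ)) (b + 1) with h | h
        · rw [if_pos h]; omega
        · rw [if_neg (by omega)]; omega)
    (by intro k k' hk hkk'
        rw [hpad_eval, hpad_eval]
        rw [if_neg (show ¬((k : ℕ) = 0) by omega), if_neg (show ¬((k' : ℕ) = 0) by omega)]
        rcases lt_or_ge ((k : ℕ)) (b + 1) with h | h <;>
          rcases lt_or_ge ((k' : ℕ)) (b + 1) with h' | h'
        · rw [if_pos h, if_pos h']; omega
        · rw [if_pos h, if_neg (show ¬((k' : ℕ) < b + 1) by omega)]; omega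
        · omega
        · rw [if_neg (show ¬((k : ℕ) < b + 1) by omega),
             if_neg (show ¬((k' : ℕ) < b + 1) by omega)]; omega)
  rw [h1, h2, Fin.sum_univ_one, Matrix.det_fin_one]
  refine congrArg₂ (· * ·) rfl ?_
  simp only [Matrix.of_apply]
  apply Finset.sum_congr rfl
  intro k _
  refine congrArg₂ (· * ·) ?_ rfl
  congr 1

/-- **Giambelli's formula.** Let `λ = (λ₁ ≥ … ≥ λ_ℓ)` be a partition (weakly
decreasing, positive parts) of rank `r = #{i : λᵢ ≥ i}`, with Frobenius
coordinates `αᵢ = λᵢ − i`, `βᵢ = λ'ᵢ − i` (`1 ≤ i ≤ r`, `λ'` the conjugate,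
`λ'ⱼ = #{i : λᵢ ≥ j}`).  Then `s_λ = det( s_{(αᵢ|βⱼ)} )_{1≤i,j≤r}`.
Below indices are 0-based: the `(i : Fin r)`-th Frobenius coordinates are
`α_{i+1} = λ_{i+1} − (i+1)` and `β_{j+1} = λ'_{j+1} − (j+1)`. -/
theorem giambelli (ℓ r : ℕ) (lam : Fin ℓ → ℕ)
    (hmono : ∀ i j : Fin ℓ, i ≤ j → lam j ≤ lam i)
    (hpos : ∀ i, 0 < lam i)
    (hr : r ≤ ℓ)
    (hrank : r = (Finset.univ.filter fun i : Fin ℓ => (i : ℕ) + 1 ≤ lam i).card) :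
    schurPoly lam =
      Matrix.det (Matrix.of fun i j : Fin r =>
        hookSchur (lam ⟨i, lt_of_lt_of_le i.2 hr⟩ - ((i : ℕ) + 1))
          ((Finset.univ.filter fun k : Fin ℓ => (j : ℕ) + 1 ≤ lam k).card
            - ((j : ℕ) + 1))) := by
  classical
  have hC1 : ∀ i : Fin ℓ, ((i : ℕ) < r ↔ (i : ℕ) + 1 ≤ lam i) := by
    intro i
    constructor
    · intro hir
      by_contra hcon
      push_neg at hcon
      have hsub : (Finset.univ.filter fun k : Fin ℓ => (k : ℕ) + 1 ≤ lam k) ⊆ Finset.Iio i := by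
        intro k hk
        rw [Finset.mem_filter] at hk
        rw [Finset.mem_Iio]
        by_contra hki
        push_neg at hki
        have h1 := hmono i k hki
        have h2 : (i : ℕ) ≤ (k : ℕ) := hki
        have h3 := hk.2
        omega
      have hcard := Finset.card_le_card hsub
      rw [Fin.card_Iio] at hcard
      omega
    · intro hlam_i
      have hsub : Finset.Iic i ⊆ (Finset.univ.filter fun k : Fin ℓ => (k : ℕ) + 1 ≤ lam k) := by
        intro k hk
        rw [Finset.mem_Iic] at hk
        rw [Finset.mem_filter]
        refine ⟨Finset.mem_univ _, ?_⟩
        have h1 := hmono k i hk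
        have h2 : (k : ℕ) ≤ (i : ℕ) := hk
        omega
      have hcard := Finset.card_le_card hsub
      rw [Fin.card_Iic] at hcard
      omega
  set conjc : ℕ → ℕ :=
    fun j => (Finset.univ.filter fun k : Fin ℓ => j + 1 ≤ lam k).card with hconj_def
  have hC3 : ∀ a b : ℕ, a ≤ b → conjc b ≤ conjc a := by
    intro a b hab
    apply Finset.card_le_card
    intro k hk
    rw [Finset.mem_filter] at hk ⊢
    exact ⟨hk.1, by omega⟩
  have hC4 : ∀ j : ℕ, conjc j ≤ ℓ := by
    intro j
    calc conjc j ≤ Finset.univ.card := Finset.card_le_card (Finset.subset_univ _)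
    _ = ℓ := by simp
  have hC2 : ∀ j : Fin r, (j : ℕ) + 1 ≤ conjc (j : ℕ) := by
    intro j
    have hjl : (j : ℕ) < ℓ := lt_of_lt_of_le j.2 hr
    have hsub : Finset.Iic (⟨(j : ℕ), hjl⟩ : Fin ℓ) ⊆
        (Finset.univ.filter fun k : Fin ℓ => (j : ℕ) + 1 ≤ lam k) := by
      intro k hk
      rw [Finset.mem_Iic] at hk
      rw [Finset.mem_filter]
      refine ⟨Finset.mem_univ _, ?_⟩
      have h1 := hmono k ⟨(j : ℕ), hjl⟩ hk
      have h2 : (j : ℕ) + 1 ≤ lam ⟨(j : ℕ), hjl⟩ := (hC1 ⟨(j : ℕ), hjl⟩).1 j.2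
      omega
    have hcard := Finset.card_le_card hsub
    rw [Fin.card_Iic] at hcard
    exact hcard
  have hbdd : ∀ j : Fin r, conjc (j : ℕ) - ((j : ℕ) + 1) < ℓ := by
    intro j
    have h1 := hC4 (j : ℕ)
    have h2 : (j : ℕ) < ℓ := lt_of_lt_of_le j.2 hr
    omega
  set q : Fin r → Fin ℓ := fun j => ⟨conjc (j : ℕ) - ((j : ℕ) + 1), hbdd j⟩ with hq_def
  have hqval : ∀ j : Fin r, (q j : ℕ) = conjc (j : ℕ) - ((j : ℕ) + 1) := fun j => rfl
  have hq : ∀ i j : Fin r, i < j → q j < q i := by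
    intro i j hij
    rw [Fin.lt_iff_val_lt_val, hqval, hqval]
    have h1 := hC2 i
    have h2 := hC2 j
    have h3 := hC3 ((i : ℕ)) ((j : ℕ)) (le_of_lt hij)
    have h4 : (i : ℕ) < (j : ℕ) := hij
    omega
  have hlamtail : ∀ k : Fin ℓ, r ≤ (k : ℕ) → lam k ≤ (k : ℕ) := by
    intro k hk
    have := (hC1 k)
    omega
  have hcross : ∀ (j : Fin r) (k : Fin ℓ), r ≤ (k : ℕ) → ((q j : ℕ) ≠ (k : ℕ) - lam k) := by
    intro j k hk
    rw [hqval]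
    have hlamk := hlamtail k hk
    rcases le_or_gt ((j : ℕ) + 1) (lam k) with h | h
    · have hsub : Finset.Iic k ⊆ (Finset.univ.filter fun k' : Fin ℓ => (j : ℕ) + 1 ≤ lam k') := by
        intro k' hk'
        rw [Finset.mem_Iic] at hk'
        rw [Finset.mem_filter]
        exact ⟨Finset.mem_univ _, by have := hmono k' k hk'; omega⟩
      have hcard := Finset.card_le_card hsub
      rw [Fin.card_Iic] at hcard
      have : (k : ℕ) + 1 ≤ conjc (j : ℕ) := hcard
      omega
    · have hsub : (Finset.univ.filter fun k' : Fin ℓ => (j : ℕ) + 1 ≤ lam k') ⊆ Finset.Iio k := by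
        intro k' hk'
        rw [Finset.mem_filter] at hk'
        rw [Finset.mem_Iio]
        by_contra hcon
        push_neg at hcon
        have h1 := hmono k k' hcon
        have h2 := hk'.2
        omega
      have hcard := Finset.card_le_card hsub
      rw [Fin.card_Iio] at hcard
      have : conjc (j : ℕ) ≤ (k : ℕ) := hcard
      omega
  have htm : ∀ k k' : Fin ℓ, r ≤ (k : ℕ) → (k : ℕ) < (k' : ℕ) →
      (k : ℕ) - lam k < (k' : ℕ) - lam k' := by
    intro k k' hk hkk'
    have h1 := hlamtail k hk
    have h2 := hmono k k' (le_of_lt (by rwa [Fin.lt_iff_val_lt_val]))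
    omega
  have hcore := core ℓ r hr lam q hq hlamtail hcross htm
  rw [hcore]
  have hentry : ∀ i j : Fin r,
      hookSchur (lam ⟨(i : ℕ), lt_of_lt_of_le i.2 hr⟩ - ((i : ℕ) + 1))
        (conjc (j : ℕ) - ((j : ℕ) + 1)) =
      (-1 : MvPolynomial ℕ ℚ) ^ ((q j : ℕ)) *
        ∑ k : Fin ℓ, elemSchurZ ((lam (Fin.castLE hr i) : ℤ) - ((Fin.castLE hr i : Fin ℓ) : ℤ)
          + (k : ℤ)) * (Bmat ℓ)⁻¹ k (q j) := by
    intro i j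
    rw [hook_eval ℓ _ _ (hbdd j)]
    refine congrArg₂ (· * ·) rfl ?_
    apply Finset.sum_congr rfl
    intro k _
    refine congrArg₂ (· * ·) ?_ rfl
    congr 1
    have hlami : (i : ℕ) + 1 ≤ lam ⟨(i : ℕ), lt_of_lt_of_le i.2 hr⟩ :=
      (hC1 ⟨(i : ℕ), lt_of_lt_of_le i.2 hr⟩).1 i.2
    have : ((lam ⟨(i : ℕ), lt_of_lt_of_le i.2 hr⟩ - ((i : ℕ) + 1) : ℕ) : ℤ)
        = (lam ⟨(i : ℕ), lt_of_lt_of_le i.2 hr⟩ : ℤ) - ((i : ℕ) + 1 : ℤ) := by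
      push_cast [Nat.cast_sub hlami]
      ring
    rw [this]
    have hcast : lam (Fin.castLE hr i) = lam ⟨(i : ℕ), lt_of_lt_of_le i.2 hr⟩ := rfl
    rw [hcast]
    have hval : ((Fin.castLE hr i : Fin ℓ) : ℤ) = ((i : ℕ) : ℤ) := rfl
    rw [hval]
    push_cast
    ring
  have hmat : (Matrix.of fun i j : Fin r =>
      hookSchur (lam ⟨(i : ℕ), lt_of_lt_of_le i.2 hr⟩ - ((i : ℕ) + 1))
        (conjc (j : ℕ) - ((j : ℕ) + 1))) =
      Matrix.of (fun i j : Fin r => (fun j' : Fin r => (-1 : MvPolynomial ℕ ℚ) ^ ((q j' : ℕ))) j *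
        (Matrix.of fun i j : Fin r =>
          ∑ k : Fin ℓ, elemSchurZ ((lam (Fin.castLE hr i) : ℤ) - ((Fin.castLE hr i : Fin ℓ) : ℤ)
            + (k : ℤ)) * (Bmat ℓ)⁻¹ k (q j)) i j) := by
    exact Matrix.ext (fun i j => hentry i j)
  rw [hmat, Matrix.det_mul_row]
  rw [Finset.prod_pow_eq_pow_sum]
end
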